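/- arXiv:1202.4553 — 2 statements merged into one kernel-verified Lean document; each statement's English description precedes it below -/
import Mathlib

section
/- Let T₁ and T₂ be Hermitian positive semidefinite n × n complex matrices. Then |Tr(log(I + T₂)) − Tr(log(I + T₁))| ≤ ‖T₂ − T₁‖₁, where ‖·‖₁ is the trace norm (sum of singular values). -/
open scoped ComplexOrder

open Matrix

/-- Trace norm: the sum of the singular values of `X`. -/
noncomputable def traceNorm {n : ℕ} (X : Matrix (Fin n) (Fin n) ℂ) : ℝ :=
  ∑ i, Real.sqrt ((Matrix.posSemidef_conjTranspose_mul_self X).1.eigenvalues i)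

variable {n : ℕ}

-- trace of unitary conjugation of a diagonal matrix
lemma trace_conj_diag (U : Matrix.unitaryGroup (Fin n) ℂ) (d : Fin n → ℂ) :
    Matrix.trace ((U : Matrix (Fin n) (Fin n) ℂ) * Matrix.diagonal d *
      (star U : Matrix (Fin n) (Fin n) ℂ)) = ∑ i, d i := by
  rw [Matrix.trace_mul_comm, ← Matrix.mul_assoc, Unitary.coe_star_mul_self, Matrix.one_mul,
    Matrix.trace_diagonal]

lemma det_conj_diag (U : Matrix.unitaryGroup (Fin n) ℂ) (d : Fin n → ℂ) :
    Matrix.det ((U : Matrix (Fin n) (Fin n) ℂ) * Matrix.diagonal d *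
      (star U : Matrix (Fin n) (Fin n) ℂ)) = ∏ i, d i := by
  rw [Matrix.det_mul_right_comm, (Matrix.mem_unitaryGroup_iff).mp U.2, Matrix.one_mul, Matrix.det_diagonal]

lemma conj_mul_conj (U : Matrix.unitaryGroup (Fin n) ℂ) (A B : Matrix (Fin n) (Fin n) ℂ) :
    ((U : Matrix (Fin n) (Fin n) ℂ) * A * (star U : Matrix (Fin n) (Fin n) ℂ)) *
      ((U : Matrix (Fin n) (Fin n) ℂ) * B * (star U : Matrix (Fin n) (Fin n) ℂ)) =
      (U : Matrix (Fin n) (Fin n) ℂ) * (A * B) * (star U : Matrix (Fin n) (Fin n) ℂ) := by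
  have h : (star U : Matrix (Fin n) (Fin n) ℂ) * (U : Matrix (Fin n) (Fin n) ℂ) = 1 :=
    Unitary.coe_star_mul_self U
  calc ((U : Matrix (Fin n) (Fin n) ℂ) * A * (star U : Matrix (Fin n) (Fin n) ℂ)) *
      ((U : Matrix (Fin n) (Fin n) ℂ) * B * (star U : Matrix (Fin n) (Fin n) ℂ))
      = (U : Matrix (Fin n) (Fin n) ℂ) * A *
        (((star U : Matrix (Fin n) (Fin n) ℂ)) * (U : Matrix (Fin n) (Fin n) ℂ)) * B *
        (star U : Matrix (Fin n) (Fin n) ℂ) := by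
        simp only [Matrix.mul_assoc]
    _ = _ := by rw [h]; simp only [Matrix.mul_assoc, Matrix.one_mul]

-- eigenvalues of a matrix that is ≥ 1 are ≥ 1
lemma one_le_eigenvalues {A : Matrix (Fin n) (Fin n) ℂ} (hA : A.IsHermitian)
    (h : (A - 1).PosSemidef) (i : Fin n) : 1 ≤ hA.eigenvalues i := by
  have hv : star ⇑(hA.eigenvectorBasis i) ⬝ᵥ ((1 : Matrix (Fin n) (Fin n) ℂ) *ᵥ
      ⇑(hA.eigenvectorBasis i)) = 1 := by
    rw [Matrix.one_mulVec, dotProduct_comm, ← EuclideanSpace.inner_eq_star_dotProduct,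
      inner_self_eq_norm_sq_to_K, hA.eigenvectorBasis.orthonormal.1 i]
    norm_num
  have hsplit : A *ᵥ ⇑(hA.eigenvectorBasis i) =
      (A - 1) *ᵥ ⇑(hA.eigenvectorBasis i) + (1 : Matrix (Fin n) (Fin n) ℂ) *ᵥ
        ⇑(hA.eigenvectorBasis i) := by
    rw [← Matrix.add_mulVec, sub_add_cancel]
  rw [hA.eigenvalues_eq i, hsplit, dotProduct_add, map_add, hv]
  simp only [RCLike.one_re]
  exact le_add_of_nonneg_left (h.re_dotProduct_nonneg _)

lemma one_le_det_one_add {C : Matrix (Fin n) (Fin n) ℂ} (hC : C.PosSemidef) :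
    (1 : ℂ) ≤ ((1 : Matrix (Fin n) (Fin n) ℂ) + C).det := by
  have hH : ((1 : Matrix (Fin n) (Fin n) ℂ) + C).IsHermitian :=
    (Matrix.PosSemidef.one.add hC).1
  have hps : ((1 : Matrix (Fin n) (Fin n) ℂ) + C - 1).PosSemidef := by
    simpa using hC
  have h1 : ∀ i, 1 ≤ hH.eigenvalues i := one_le_eigenvalues hH hps
  rw [hH.det_eq_prod_eigenvalues]
  have : ((1 : ℝ) : ℂ) ≤ ((∏ i, hH.eigenvalues i : ℝ) : ℂ) := by
    rw [Complex.real_le_real]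
    calc (1:ℝ) = ∏ _i : Fin n, 1 := by simp
      _ ≤ ∏ i, hH.eigenvalues i :=
        Finset.prod_le_prod (fun i _ => zero_le_one) (fun i _ => h1 i)
  simpa using this

lemma det_le_det_add {W Q : Matrix (Fin n) (Fin n) ℂ} (hW : W.PosDef) (hQ : Q.PosSemidef) :
    W.det ≤ (W + Q).det := by
  obtain ⟨B, rfl⟩ : ∃ B : Matrix (Fin n) (Fin n) ℂ, Q = Bᴴ * B := by
    open scoped MatrixOrder in
    exact ⟨CFC.sqrt Q, by rw [(CFC.sqrt_nonneg Q).posSemidef.1.eq, CFC.sqrt_mul_sqrt_self Q hQ.nonneg]⟩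
  have hdet : IsUnit W.det := hW.det_pos.ne'.isUnit
  have key : W + Bᴴ * B = W * (1 + W⁻¹ * Bᴴ * B) := by
    rw [Matrix.mul_add, Matrix.mul_one, ← Matrix.mul_assoc, ← Matrix.mul_assoc,
      Matrix.mul_nonsing_inv _ hdet, Matrix.one_mul]
  have hC : (B * W⁻¹ * Bᴴ).PosSemidef :=
    (hW.inv.posSemidef).mul_mul_conjTranspose_same B
  have hdet2 : (1 : ℂ) ≤ (1 + B * W⁻¹ * Bᴴ).det := one_le_det_one_add hC
  calc W.det = W.det * 1 := (mul_one _).symm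
    _ ≤ W.det * (1 + B * W⁻¹ * Bᴴ).det := by
        exact mul_le_mul_of_nonneg_left hdet2 hW.det_pos.le
    _ = (W + Bᴴ * B).det := by
        rw [key, Matrix.det_mul, Matrix.det_one_add_mul_comm (W⁻¹ * Bᴴ) B, Matrix.mul_assoc]

lemma det_add_le_det_mul {T P : Matrix (Fin n) (Fin n) ℂ} (hT : T.PosSemidef)
    (hP : P.PosSemidef) :
    ((1 + T) + P).det ≤ (1 + T).det * ((1 : Matrix (Fin n) (Fin n) ℂ) + P).det := by
  set W := (1 : Matrix (Fin n) (Fin n) ℂ) + T with hWdef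
  have hW : W.PosDef := Matrix.PosDef.one.add_posSemidef hT
  obtain ⟨B, hB⟩ : ∃ B : Matrix (Fin n) (Fin n) ℂ, P = Bᴴ * B := by
    open scoped MatrixOrder in
    exact ⟨CFC.sqrt P, by rw [(CFC.sqrt_nonneg P).posSemidef.1.eq, CFC.sqrt_mul_sqrt_self P hP.nonneg]⟩
  have hdet : IsUnit W.det := hW.det_pos.ne'.isUnit
  have hWinv : W⁻¹.PosDef := hW.inv
  have hermInv : W⁻¹ᴴ = W⁻¹ := hWinv.1
  have hTT : (T + T * T).PosSemidef := by
    refine hT.add ?_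
    have := Matrix.posSemidef_conjTranspose_mul_self T
    rwa [hT.1] at this
  have hid : W⁻¹ * (T + T * T) * W⁻¹ᴴ = 1 - W⁻¹ := by
    rw [hermInv]
    have h1 : T + T * T = T * W := by rw [hWdef, Matrix.mul_add, Matrix.mul_one, add_comm]
    have h2 : T = W - 1 := by rw [hWdef]; abel
    rw [h1]
    simp only [Matrix.mul_assoc]
    rw [Matrix.mul_nonsing_inv _ hdet, Matrix.mul_one, h2, Matrix.mul_sub, Matrix.mul_one,
      Matrix.nonsing_inv_mul _ hdet]
  have hsub : ((1 : Matrix (Fin n) (Fin n) ℂ) - W⁻¹).PosSemidef := by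
    rw [← hid]; exact hTT.mul_mul_conjTranspose_same W⁻¹
  have key : W + P = W * (1 + W⁻¹ * Bᴴ * B) := by
    rw [hB, Matrix.mul_add, Matrix.mul_one, ← Matrix.mul_assoc, ← Matrix.mul_assoc,
      Matrix.mul_nonsing_inv _ hdet, Matrix.one_mul]
  have e1 : (W + P).det = W.det * (1 + B * (W⁻¹ * Bᴴ)).det := by
    rw [key, Matrix.det_mul, Matrix.det_one_add_mul_comm (W⁻¹ * Bᴴ) B]
  have e2 : ((1 : Matrix (Fin n) (Fin n) ℂ) + P).det = (1 + B * Bᴴ).det := by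
    rw [hB, Matrix.det_one_add_mul_comm]
  have hC : (B * (W⁻¹ * Bᴴ)).PosSemidef := by
    have := (hWinv.posSemidef).mul_mul_conjTranspose_same B
    rwa [Matrix.mul_assoc] at this
  have hQ' : (B * (1 - W⁻¹) * Bᴴ).PosSemidef := hsub.mul_mul_conjTranspose_same B
  have hsum : (1 + B * (W⁻¹ * Bᴴ)) + B * (1 - W⁻¹) * Bᴴ = 1 + B * Bᴴ := by
    rw [Matrix.mul_sub, Matrix.mul_one, Matrix.sub_mul]
    simp only [Matrix.mul_assoc]
    abel
  have hle := det_le_det_add (Matrix.PosDef.one.add_posSemidef hC) hQ'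
  rw [hsum] at hle
  calc (W + P).det = W.det * (1 + B * (W⁻¹ * Bᴴ)).det := e1
    _ ≤ W.det * (1 + B * Bᴴ).det := mul_le_mul_of_nonneg_left hle hW.det_pos.le
    _ = W.det * ((1 : Matrix (Fin n) (Fin n) ℂ) + P).det := by rw [e2]

lemma sum_sqrt_eig_congr {A B : Matrix (Fin n) (Fin n) ℂ} (hA : A.IsHermitian)
    (hB : B.IsHermitian) (h : A = B) :
    ∑ i, Real.sqrt (hA.eigenvalues i) = ∑ i, Real.sqrt (hB.eigenvalues i) := by
  subst h; rfl

lemma traceNorm_conj_diag (U : Matrix.unitaryGroup (Fin n) ℂ) (d : Fin n → ℝ)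
    {Δ : Matrix (Fin n) (Fin n) ℂ}
    (hΔeq : Δ = (U : Matrix (Fin n) (Fin n) ℂ) * Matrix.diagonal (fun i => ((d i : ℝ) : ℂ)) *
      (star U : Matrix (Fin n) (Fin n) ℂ)) :
    traceNorm Δ = ∑ i, |d i| := by
  have hDps : (Matrix.diagonal (fun i => ((|d i| : ℝ) : ℂ))).PosSemidef := by
    refine Matrix.posSemidef_diagonal_iff.mpr fun i => ?_
    rw [Complex.zero_le_real]
    exact abs_nonneg _
  have hSps : ((U : Matrix (Fin n) (Fin n) ℂ) * Matrix.diagonal (fun i => ((|d i| : ℝ) : ℂ)) *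
      (star U : Matrix (Fin n) (Fin n) ℂ)).PosSemidef := by
    have := hDps.mul_mul_conjTranspose_same (U : Matrix (Fin n) (Fin n) ℂ)
    rwa [← Matrix.star_eq_conjTranspose, ← Unitary.coe_star] at this
  have hB := Matrix.posSemidef_conjTranspose_mul_self Δ
  have hstarfun : star (fun i => ((d i : ℝ) : ℂ)) = fun i => ((d i : ℝ) : ℂ) := by
    funext i
    simp
  have hdiagstar : star (Matrix.diagonal (fun i => ((d i : ℝ) : ℂ))) =
      Matrix.diagonal (fun i => ((d i : ℝ) : ℂ)) := by
    rw [Matrix.star_eq_conjTranspose, Matrix.diagonal_conjTranspose, hstarfun]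
  have hherm : Δᴴ = Δ := by
    rw [hΔeq, ← Matrix.star_eq_conjTranspose, StarMul.star_mul, StarMul.star_mul, star_star,
      hdiagstar, Matrix.mul_assoc]
  have hsq : ((U : Matrix (Fin n) (Fin n) ℂ) * Matrix.diagonal (fun i => ((|d i| : ℝ) : ℂ)) *
      (star U : Matrix (Fin n) (Fin n) ℂ)) ^ 2 = Δᴴ * Δ := by
    rw [pow_two, conj_mul_conj, hherm, hΔeq, conj_mul_conj]
    have habs : (fun i => ((|d i| : ℝ) : ℂ) * ((|d i| : ℝ) : ℂ)) =
        (fun i => ((d i : ℝ) : ℂ) * ((d i : ℝ) : ℂ)) := by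
      funext i
      rw [← Complex.ofReal_mul, ← Complex.ofReal_mul, abs_mul_abs_self]
    rw [Matrix.diagonal_mul_diagonal, Matrix.diagonal_mul_diagonal, habs]
  have hSeq : ((U : Matrix (Fin n) (Fin n) ℂ) * Matrix.diagonal (fun i => ((|d i| : ℝ) : ℂ)) *
      (star U : Matrix (Fin n) (Fin n) ℂ)) = (open scoped MatrixOrder in CFC.sqrt (Δᴴ * Δ)) := by
    open scoped MatrixOrder in
    exact ((CFC.sqrt_eq_iff _ _ hB.nonneg hSps.nonneg).mpr (by rw [← pow_two]; exact hsq)).symm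
  have t1 : Matrix.trace (open scoped MatrixOrder in CFC.sqrt (Δᴴ * Δ)) =
      ∑ i, ((Real.sqrt (hB.1.eigenvalues i) : ℝ) : ℂ) := by
    open scoped MatrixOrder in
    rw [CFC.sqrt_eq_cfc, cfc_nnreal_eq_real _ (Δᴴ * Δ), hB.1.cfc_eq, Matrix.IsHermitian.cfc,
      Unitary.conjStarAlgAut_apply, trace_conj_diag]
    simp [max_eq_left (hB.eigenvalues_nonneg _)]
  have t2 : Matrix.trace (open scoped MatrixOrder in CFC.sqrt (Δᴴ * Δ)) = ∑ i, ((|d i| : ℝ) : ℂ) := by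
    rw [← hSeq]; exact trace_conj_diag U _
  have : ((∑ i, Real.sqrt (hB.1.eigenvalues i) : ℝ) : ℂ) = ((∑ i, |d i| : ℝ) : ℂ) := by
    push_cast
    rw [← t1, t2]
  exact_mod_cast this

lemma traceNorm_neg (X : Matrix (Fin n) (Fin n) ℂ) : traceNorm (-X) = traceNorm X := by
  unfold traceNorm
  exact sum_sqrt_eig_congr _ _ (by simp)

lemma traceNorm_hermitian {Δ : Matrix (Fin n) (Fin n) ℂ} (hΔ : Δ.IsHermitian) :
    traceNorm Δ = ∑ i, |hΔ.eigenvalues i| :=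
  traceNorm_conj_diag hΔ.eigenvectorUnitary hΔ.eigenvalues hΔ.spectral_theorem

lemma key_oneside (T₁ T₂ : Matrix (Fin n) (Fin n) ℂ)
    (h1 : T₁.PosSemidef) (h2 : T₂.PosSemidef) :
    Real.log (((1 : Matrix (Fin n) (Fin n) ℂ) + T₂).det.re) -
      Real.log (((1 : Matrix (Fin n) (Fin n) ℂ) + T₁).det.re) ≤ traceNorm (T₂ - T₁) := by
  have hΔ : (T₂ - T₁).IsHermitian := h2.1.sub h1.1
  have hspec : T₂ - T₁ = (hΔ.eigenvectorUnitary : Matrix (Fin n) (Fin n) ℂ) *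
      Matrix.diagonal (fun i => ((hΔ.eigenvalues i : ℝ) : ℂ)) *
      (star hΔ.eigenvectorUnitary : Matrix (Fin n) (Fin n) ℂ) := hΔ.spectral_theorem
  set U := hΔ.eigenvectorUnitary with hUdef
  set μ := hΔ.eigenvalues with hμdef
  set P : Matrix (Fin n) (Fin n) ℂ := (U : Matrix (Fin n) (Fin n) ℂ) *
      Matrix.diagonal (fun i => ((max (μ i) 0 : ℝ) : ℂ)) *
      (star U : Matrix (Fin n) (Fin n) ℂ) with hPdef
  have hconj : ∀ d : Fin n → ℝ, (0 ≤ d) → ((U : Matrix (Fin n) (Fin n) ℂ) *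
      Matrix.diagonal (fun i => ((d i : ℝ) : ℂ)) *
      (star U : Matrix (Fin n) (Fin n) ℂ)).PosSemidef := by
    intro d hd
    have hDps : (Matrix.diagonal (fun i => ((d i : ℝ) : ℂ))).PosSemidef := by
      refine Matrix.posSemidef_diagonal_iff.mpr fun i => ?_
      rw [Complex.zero_le_real]
      exact hd i
    have := hDps.mul_mul_conjTranspose_same (U : Matrix (Fin n) (Fin n) ℂ)
    rwa [← Matrix.star_eq_conjTranspose] at this
  have hPps : P.PosSemidef := hconj _ (fun i => le_max_right _ _)
  have hPD : (P - (T₂ - T₁)).PosSemidef := by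
    have heq : P - (T₂ - T₁) = (U : Matrix (Fin n) (Fin n) ℂ) *
        Matrix.diagonal (fun i => ((max (μ i) 0 - μ i : ℝ) : ℂ)) *
        (star U : Matrix (Fin n) (Fin n) ℂ) := by
      rw [hspec, hPdef, ← Matrix.sub_mul, ← Matrix.mul_sub, Matrix.diagonal_sub]
      congr 2
      funext i
      push_cast
      ring
    rw [heq]
    exact hconj _ (fun i => by simp [sub_nonneg, le_max_left])
  have hW1 : ((1 : Matrix (Fin n) (Fin n) ℂ) + T₁).PosDef := Matrix.PosDef.one.add_posSemidef h1
  have hW2 : ((1 : Matrix (Fin n) (Fin n) ℂ) + T₂).PosDef := Matrix.PosDef.one.add_posSemidef h2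
  have step1 : ((1 : Matrix (Fin n) (Fin n) ℂ) + T₂).det ≤ ((1 + T₁) + P).det := by
    have heq : ((1 : Matrix (Fin n) (Fin n) ℂ) + T₂) + (P - (T₂ - T₁)) = (1 + T₁) + P := by abel
    calc ((1 : Matrix (Fin n) (Fin n) ℂ) + T₂).det
        ≤ (((1 : Matrix (Fin n) (Fin n) ℂ) + T₂) + (P - (T₂ - T₁))).det :=
          det_le_det_add hW2 hPD
      _ = _ := by rw [heq]
  have step2 : (((1 : Matrix (Fin n) (Fin n) ℂ) + T₁) + P).det ≤
      (1 + T₁).det * ((1 : Matrix (Fin n) (Fin n) ℂ) + P).det := det_add_le_det_mul h1 hPps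
  have det1P : ((1 : Matrix (Fin n) (Fin n) ℂ) + P).det =
      ((∏ i, (1 + max (μ i) 0) : ℝ) : ℂ) := by
    have hone : (1 : Matrix (Fin n) (Fin n) ℂ) = (U : Matrix (Fin n) (Fin n) ℂ) *
        1 * (star U : Matrix (Fin n) (Fin n) ℂ) := by
      rw [Matrix.mul_one]
      exact ((Matrix.mem_unitaryGroup_iff).mp U.2).symm
    have h1eq : (1 : Matrix (Fin n) (Fin n) ℂ) + P = (U : Matrix (Fin n) (Fin n) ℂ) *
        Matrix.diagonal (fun i => ((1 + max (μ i) 0 : ℝ) : ℂ)) *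
        (star U : Matrix (Fin n) (Fin n) ℂ) := by
      conv_lhs => rw [hone, hPdef]
      rw [← Matrix.add_mul, ← Matrix.mul_add]
      congr 2
      rw [← Matrix.diagonal_one, Matrix.diagonal_add]
      funext i
      push_cast
      ring
    rw [h1eq, det_conj_diag]
    push_cast
    rfl
  have hd1pos : 0 < ((1 : Matrix (Fin n) (Fin n) ℂ) + T₁).det.re := by
    have := hW1.det_pos
    rw [Complex.lt_def] at this
    simpa using this.1
  have hd2pos : 0 < ((1 : Matrix (Fin n) (Fin n) ℂ) + T₂).det.re := by
    have := hW2.det_pos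
    rw [Complex.lt_def] at this
    simpa using this.1
  have hprodpos : 0 < ∏ i, (1 + max (μ i) 0) := by
    refine Finset.prod_pos fun i _ => ?_
    have := le_max_right (μ i) 0
    linarith
  have c1 : ((1 : Matrix (Fin n) (Fin n) ℂ) + T₂).det.re ≤
      ((1 : Matrix (Fin n) (Fin n) ℂ) + T₁).det.re * ∏ i, (1 + max (μ i) 0) := by
    have h := (Complex.le_def.mp (step1.trans step2)).1
    rwa [det1P, Complex.mul_re, Complex.ofReal_re, Complex.ofReal_im, mul_zero, sub_zero] at h
  have hlog1 : Real.log (((1 : Matrix (Fin n) (Fin n) ℂ) + T₂).det.re) ≤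
      Real.log (((1 : Matrix (Fin n) (Fin n) ℂ) + T₁).det.re) +
        Real.log (∏ i, (1 + max (μ i) 0)) := by
    rw [← Real.log_mul hd1pos.ne' hprodpos.ne']
    exact Real.log_le_log hd2pos c1
  have hlog2 : Real.log (∏ i, (1 + max (μ i) 0)) ≤ ∑ i, max (μ i) 0 := by
    have hle : ∏ i, (1 + max (μ i) 0) ≤ Real.exp (∑ i, max (μ i) 0) := by
      rw [Real.exp_sum]
      refine Finset.prod_le_prod (fun i _ => by positivity) fun i _ => ?_
      rw [add_comm]
      exact Real.add_one_le_exp _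
    calc Real.log (∏ i, (1 + max (μ i) 0)) ≤ Real.log (Real.exp (∑ i, max (μ i) 0)) :=
        Real.log_le_log hprodpos hle
      _ = _ := Real.log_exp _
  have hmax : ∑ i, max (μ i) 0 ≤ traceNorm (T₂ - T₁) := by
    rw [traceNorm_hermitian hΔ, ← hμdef]
    exact Finset.sum_le_sum fun i _ => max_le (le_abs_self _) (abs_nonneg _)
  linarith

theorem stmt6 {n : ℕ} (T₁ T₂ : Matrix (Fin n) (Fin n) ℂ)
    (h1 : T₁.PosSemidef) (h2 : T₂.PosSemidef) :
    |Real.log (((1 : Matrix (Fin n) (Fin n) ℂ) + T₂).det.re) -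
      Real.log (((1 : Matrix (Fin n) (Fin n) ℂ) + T₁).det.re)| ≤ traceNorm (T₂ - T₁) := by
  rw [abs_sub_le_iff]
  refine ⟨key_oneside T₁ T₂ h1 h2, ?_⟩
  have h := key_oneside T₂ T₁ h2 h1
  rwa [show T₁ - T₂ = -(T₂ - T₁) from (neg_sub _ _).symm, traceNorm_neg] at h
end

section
/- Let T be an n × n Hermitian positive semidefinite matrix and P an orthogonal projection with Q = I − P. Then Tr(log(I + T)) ≤ Tr(log(I + P·T·P)) + Tr(log(I + Q·T·Q)). (Berezin-type inequality.) -/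
open scoped ComplexOrder
open Matrix Finset

lemma sqrt_prod' {ι : Type*} (s : Finset ι) (f : ι → ℝ) (hf : ∀ i ∈ s, 0 ≤ f i) :
    Real.sqrt (∏ i ∈ s, f i) = ∏ i ∈ s, Real.sqrt (f i) := by
  induction s using Finset.cons_induction with
  | empty => simp
  | cons a s ha ih =>
      rw [Finset.prod_cons, Finset.prod_cons,
        Real.sqrt_mul (hf a (Finset.mem_cons_self a s)),
        ih (fun i hi => hf i (Finset.mem_cons_of_mem hi))]

lemma det_one_add_re {n : ℕ} {Z : Matrix (Fin n) (Fin n) ℂ} (hZ : Z.PosSemidef) :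
    (2:ℝ)^n * Real.sqrt Z.det.re ≤ ((1 + Z).det).re := by
  have hH := hZ.1
  set U : Matrix (Fin n) (Fin n) ℂ := (hH.eigenvectorUnitary : Matrix (Fin n) (Fin n) ℂ) with hU
  have hUU : U * star U = 1 := (Matrix.mem_unitaryGroup_iff).mp hH.eigenvectorUnitary.2
  have hsp : Z = U * diagonal (RCLike.ofReal ∘ hH.eigenvalues) * star U := hH.spectral_theorem
  have key : (1 + Z) = U * (1 + diagonal (RCLike.ofReal ∘ hH.eigenvalues)) * star U := by
    rw [mul_add, add_mul, mul_one, hUU, ← hsp]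
  have hdet : (1 + Z).det = ∏ i, (1 + (hH.eigenvalues i : ℂ)) := by
    have hUU' : star U * U = 1 := (Matrix.mem_unitaryGroup_iff').mp hH.eigenvectorUnitary.2
    rw [key, det_mul, det_mul, mul_comm, ← mul_assoc, ← det_mul, hUU', det_one, one_mul]
    rw [show (1 : Matrix (Fin n) (Fin n) ℂ) + diagonal (RCLike.ofReal ∘ hH.eigenvalues)
        = diagonal (fun i => 1 + (hH.eigenvalues i : ℂ)) from by
      rw [← diagonal_one, diagonal_add]; rfl]
    rw [det_diagonal]
  have hdetZ : Z.det = ∏ i, ((hH.eigenvalues i : ℂ)) := hH.det_eq_prod_eigenvalues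
  have h1 : (1 + Z).det.re = ∏ i, (1 + hH.eigenvalues i) := by
    rw [hdet]
    rw [show (∏ i, (1 + (hH.eigenvalues i : ℂ))) = ((∏ i, (1 + hH.eigenvalues i) : ℝ) : ℂ) by
      push_cast; ring]
    exact Complex.ofReal_re _
  have h2 : Z.det.re = ∏ i, hH.eigenvalues i := by
    rw [hdetZ, show (∏ i, ((hH.eigenvalues i : ℝ)  : ℂ)) = ((∏ i, hH.eigenvalues i : ℝ) : ℂ) by
      push_cast; ring]
    exact Complex.ofReal_re _
  rw [h1, h2, sqrt_prod' _ _ (fun i _ => hZ.eigenvalues_nonneg i)]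
  calc (2:ℝ)^n * ∏ i, Real.sqrt (hH.eigenvalues i)
      = ∏ i : Fin n, (2 * Real.sqrt (hH.eigenvalues i)) := by
        rw [Finset.prod_mul_distrib, Finset.prod_const, Finset.card_univ, Fintype.card_fin]
    _ ≤ ∏ i, (1 + hH.eigenvalues i) := by
        apply Finset.prod_le_prod
        · intro i _; positivity
        · intro i _
          have h := Real.sq_sqrt (hZ.eigenvalues_nonneg i)
          nlinarith [sq_nonneg (1 - Real.sqrt (hH.eigenvalues i)), Real.sqrt_nonneg (hH.eigenvalues i)]

open scoped MatrixOrder in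
lemma minkowski_special {n : ℕ} {X Y : Matrix (Fin n) (Fin n) ℂ}
    (hX : X.PosDef) (hY : Y.PosSemidef) (hdet : X.det = Y.det) :
    (2:ℝ)^n * X.det.re ≤ (X + Y).det.re := by
  set S := CFC.sqrt X with hSdef
  have hS : S.PosSemidef := Matrix.nonneg_iff_posSemidef.mp (CFC.sqrt_nonneg X)
  have hSS : S * S = X := CFC.sqrt_mul_sqrt_self X hX.posSemidef.nonneg
  have hX2 : S.det * S.det = X.det := by rw [← det_mul, hSS]
  have hXdet : X.det ≠ 0 := hX.det_pos.ne'
  have hSdetne : S.det ≠ 0 := by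
    intro h; apply hXdet; rw [← hX2, h, mul_zero]
  have hSunit : IsUnit S.det := hSdetne.isUnit
  have hSinv : S * S⁻¹ = 1 := mul_nonsing_inv _ hSunit
  have hinvS : S⁻¹ * S = 1 := nonsing_inv_mul _ hSunit
  have hSinvH : (S⁻¹)ᴴ = S⁻¹ := hS.1.inv
  set Z := S⁻¹ * Y * S⁻¹ with hZdef
  have hZ : Z.PosSemidef := by
    have := hY.mul_mul_conjTranspose_same S⁻¹
    rwa [hSinvH] at this
  have hSZS : S * Z * S = Y := by
    have : S * (S⁻¹ * Y * S⁻¹) * S = (S * S⁻¹) * Y * (S⁻¹ * S) := by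
      simp only [mul_assoc]
    rw [hZdef, this, hSinv, hinvS, one_mul, mul_one]
  have hXY : X + Y = S * (1 + Z) * S := by
    rw [mul_add, add_mul, mul_one, hSS, hSZS]
  have hdXY : (X + Y).det = X.det * (1 + Z).det := by
    rw [hXY, det_mul, det_mul]
    linear_combination (1 + Z).det * hX2
  have hdZ : Z.det = 1 := by
    rw [hZdef, det_mul, det_mul, det_nonsing_inv, ← hdet, ← hX2]
    field_simp
    rw [Ring.inverse_eq_inv, inv_pow, inv_mul_cancel₀ (pow_ne_zero 2 hSdetne)]
  have h1 := det_one_add_re hZ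
  rw [hdZ, Complex.one_re, Real.sqrt_one, mul_one] at h1
  have hpos := hX.det_pos
  rw [Complex.lt_def] at hpos
  obtain ⟨hre, him⟩ := hpos
  simp only [Complex.zero_re, Complex.zero_im] at hre him
  have : (X + Y).det.re = X.det.re * (1 + Z).det.re := by
    rw [hdXY, Complex.mul_re, ← him, zero_mul, sub_zero]
  rw [this, mul_comm ((2:ℝ)^n) X.det.re]
  exact mul_le_mul_of_nonneg_left h1 hre.le

theorem stmt8 {n : ℕ} (T P : Matrix (Fin n) (Fin n) ℂ)
    (hT : T.PosSemidef) (hPh : Pᴴ = P) (hPi : P * P = P) :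
    Real.log (((1 : Matrix (Fin n) (Fin n) ℂ) + T).det.re) ≤
      Real.log (((1 : Matrix (Fin n) (Fin n) ℂ) + P * T * P).det.re) +
      Real.log (((1 : Matrix (Fin n) (Fin n) ℂ) + (1 - P) * T * (1 - P)).det.re) := by
  set Q : Matrix (Fin n) (Fin n) ℂ := 1 - P with hQdef
  have hQh : Qᴴ = Q := by rw [hQdef, conjTranspose_sub, conjTranspose_one, hPh]
  have hPQ : P * Q = 0 := by rw [hQdef, mul_sub, mul_one, hPi, sub_self]
  have hQP : Q * P = 0 := by rw [hQdef, sub_mul, one_mul, hPi, sub_self]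
  have hQQ : Q * Q = Q := by
    calc Q * Q = Q * 1 - Q * P := by rw [hQdef]; rw [← mul_sub]
      _ = Q := by rw [hQP, mul_one, sub_zero]
  have hPTP : (P * T * P).PosSemidef := by
    have := hT.mul_mul_conjTranspose_same P; rwa [hPh] at this
  have hQTQ : (Q * T * Q).PosSemidef := by
    have := hT.mul_mul_conjTranspose_same Q; rwa [hQh] at this
  have hA : ((1 : Matrix (Fin n) (Fin n) ℂ) + P * T * P).PosDef :=
    Matrix.PosDef.one.add_posSemidef hPTP
  have hB : ((1 : Matrix (Fin n) (Fin n) ℂ) + Q * T * Q).PosDef :=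
    Matrix.PosDef.one.add_posSemidef hQTQ
  set M : Matrix (Fin n) (Fin n) ℂ := 1 + (P * T * P + Q * T * Q) with hMdef
  have hM : M.PosDef := Matrix.PosDef.one.add_posSemidef (hPTP.add hQTQ)
  have hprod : (1 + P * T * P) * (1 + Q * T * Q) = M := by
    have h0 : P * T * P * (Q * T * Q) = 0 := by
      calc P * T * P * (Q * T * Q) = P * T * ((P * Q) * (T * Q)) := by
            simp only [mul_assoc]
        _ = 0 := by rw [hPQ, zero_mul, mul_zero]
    rw [mul_add, mul_one, add_mul, one_mul, h0, add_zero, hMdef, add_assoc]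
  have hN : ((1 : Matrix (Fin n) (Fin n) ℂ) + T).PosDef :=
    Matrix.PosDef.one.add_posSemidef hT
  set R : Matrix (Fin n) (Fin n) ℂ := P - Q with hRdef
  have hRh : Rᴴ = R := by rw [hRdef, conjTranspose_sub, hPh, hQh]
  have hRR : R * R = 1 := by
    calc R * R = P * P - Q * P - (P * Q - Q * Q) := by
          rw [hRdef]; simp only [sub_mul, mul_sub]
      _ = P + Q := by rw [hPi, hPQ, hQP, hQQ, sub_zero, zero_sub, sub_neg_eq_add]
      _ = 1 := by rw [hQdef]; abel
  have hRNR : R * (1 + T) * R = 1 + R * T * R := by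
    rw [mul_add, mul_one, add_mul, hRR]
  have hRTR : (1 + T) + R * (1 + T) * R = M + M := by
    rw [hRNR, hMdef, hRdef, hQdef]
    simp only [sub_mul, mul_sub, mul_add, add_mul, mul_one, one_mul]
    abel
  have hRNRpsd : (R * (1 + T) * R).PosSemidef := by
    have := hN.posSemidef.mul_mul_conjTranspose_same R; rwa [hRh] at this
  have hdetR : (R * (1 + T) * R).det = (1 + T).det := by
    have h1 : R.det * R.det = 1 := by rw [← det_mul, hRR, det_one]
    rw [det_mul, det_mul]
    linear_combination (1 + T).det * h1
  have key := minkowski_special hN hRNRpsd hdetR.symm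
  have h2M : (1 + T) + R * (1 + T) * R = (2 : ℂ) • M := by rw [hRTR, two_smul]
  rw [h2M, det_smul, Fintype.card_fin] at key
  have hMre : ((2 : ℂ) ^ n * M.det).re = (2:ℝ)^n * M.det.re := by
    rw [show ((2:ℂ)^n) = (((2:ℝ)^n : ℝ) : ℂ) by push_cast; ring, Complex.mul_re,
      Complex.ofReal_re, Complex.ofReal_im, zero_mul, sub_zero]
  rw [hMre] at key
  have hmain : ((1 : Matrix (Fin n) (Fin n) ℂ) + T).det.re ≤ M.det.re :=
    le_of_mul_le_mul_left key (by positivity)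
  -- positivity facts
  have hNa := hN.det_pos; rw [Complex.lt_def] at hNa
  have hAa := hA.det_pos; rw [Complex.lt_def] at hAa
  have hBa := hB.det_pos; rw [Complex.lt_def] at hBa
  simp only [Complex.zero_re, Complex.zero_im] at hNa hAa hBa
  have hbc : M.det.re = ((1 + P*T*P).det.re) * ((1 + Q*T*Q).det.re) := by
    rw [← hprod, det_mul, Complex.mul_re, ← hAa.2, zero_mul, sub_zero]
  have hfin : ((1 : Matrix (Fin n) (Fin n) ℂ) + T).det.re ≤
      ((1 + P*T*P).det.re) * ((1 + Q*T*Q).det.re) := hbc ▸ hmain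
  calc Real.log (((1 : Matrix (Fin n) (Fin n) ℂ) + T).det.re)
      ≤ Real.log (((1 + P*T*P).det.re) * ((1 + Q*T*Q).det.re)) :=
        Real.log_le_log (by exact hNa.1) hfin
    _ = _ := Real.log_mul hAa.1.ne' hBa.1.ne'
end
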